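/- arXiv:2304.10653 — 4 statements merged into one kernel-verified Lean document; each statement's English description precedes it below -/
import Mathlib

section
/- Let S be a linear subspace of ℝⁿ × ℝᵐ and let (x,y) ∈ S with (x,y) ≠ (0,0). Then ‖π_{S^⊥}(0,y)‖² ≤ ‖x‖²‖y‖² / (‖x‖² + ‖y‖²). -/
/-- The Euclidean space `ℝⁿ × ℝᵐ` with the (L²) product inner product. -/
noncomputable abbrev E2 (n m : ℕ) :=
  WithLp 2 (EuclideanSpace ℝ (Fin n) × EuclideanSpace ℝ (Fin m))

/-- The point `(x, y)` of `ℝⁿ × ℝᵐ`. -/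
noncomputable def mk2 {n m : ℕ} (x : EuclideanSpace ℝ (Fin n))
    (y : EuclideanSpace ℝ (Fin m)) : E2 n m :=
  (WithLp.linearEquiv 2 ℝ _).symm (x, y)

/-- The orthogonal projection of `E` onto the subspace `V`, as a map `E → E`. -/
noncomputable def proj {E : Type*} [NormedAddCommGroup E] [InnerProductSpace ℝ E]
    (V : Submodule ℝ E) [V.HasOrthogonalProjection] : E →L[ℝ] E :=
  V.subtypeL.comp (V.orthogonalProjectionOnto)

set_option maxHeartbeats 1000000 in
/-- If `S` is a linear subspace of `ℝⁿ × ℝᵐ` and `(x,y) ∈ S` with `(x,y) ≠ (0,0)`, then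
`‖π_{S^⊥}(0,y)‖² ≤ ‖x‖²‖y‖² / (‖x‖² + ‖y‖²)`. -/
theorem stmt3 (n m : ℕ) (S : Submodule ℝ (E2 n m))
    (x : EuclideanSpace ℝ (Fin n)) (y : EuclideanSpace ℝ (Fin m))
    (hxy : mk2 x y ∈ S) (hne : mk2 x y ≠ 0) :
    ‖proj Sᗮ (mk2 0 y)‖ ^ 2 ≤ ‖x‖ ^ 2 * ‖y‖ ^ 2 / (‖x‖ ^ 2 + ‖y‖ ^ 2) := by
  set v : E2 n m := mk2 0 y with hv
  set X : E2 n m := mk2 x y with hX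
  have hfst : v.fst = 0 ∧ v.snd = y ∧ X.fst = x ∧ X.snd = y := by
    refine ⟨rfl, rfl, rfl, rfl⟩
  have hvX : inner (𝕜 := ℝ) v X = ‖y‖ ^ 2 := by
    rw [WithLp.prod_inner_apply, show v.ofLp.1 = 0 from hfst.1, show v.ofLp.2 = y from hfst.2.1,
      show X.ofLp.2 = y from hfst.2.2.2, inner_zero_left, zero_add,
      real_inner_self_eq_norm_sq]
  have hvnorm : ‖v‖ ^ 2 = ‖y‖ ^ 2 := by
    rw [WithLp.prod_norm_sq_eq_of_L2, hfst.1, hfst.2.1]; simp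
  have hXnorm : ‖X‖ ^ 2 = ‖x‖ ^ 2 + ‖y‖ ^ 2 := by
    rw [WithLp.prod_norm_sq_eq_of_L2, hfst.2.2.1, hfst.2.2.2]
  have hXpos : (0:ℝ) < ‖x‖ ^ 2 + ‖y‖ ^ 2 := by
    rw [← hXnorm]
    exact pow_pos (norm_pos_iff.mpr hne) 2
  set p : E2 n m := proj S v with hp
  set q : E2 n m := proj Sᗮ v with hq
  have hdecomp : p + q = v := S.starProjection_add_starProjection_orthogonal v
  have hpS : p ∈ S := (S.orthogonalProjectionOnto v).2
  have hqS : q ∈ Sᗮ := (Sᗮ.orthogonalProjectionOnto v).2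
  have hpq : inner (𝕜 := ℝ) p q = 0 := hqS p hpS
  have hnorm : ‖p‖ ^ 2 + ‖q‖ ^ 2 = ‖y‖ ^ 2 := by
    rw [← hvnorm, ← hdecomp, norm_add_sq_real, hpq]
    ring
  have hqX : inner (𝕜 := ℝ) q X = 0 := real_inner_comm q X ▸ hqS X hxy
  have hpX : inner (𝕜 := ℝ) p X = ‖y‖ ^ 2 := by
    have : inner (𝕜 := ℝ) (p + q) X = inner (𝕜 := ℝ) v X := by rw [hdecomp]
    rw [inner_add_left, hqX, add_zero, hvX] at this
    exact this
  have hcs : ‖y‖ ^ 2 * ‖y‖ ^ 2 ≤ ‖p‖ ^ 2 * (‖x‖ ^ 2 + ‖y‖ ^ 2) := by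
    have habs := abs_real_inner_le_norm p X
    have h2 : (inner (𝕜 := ℝ) p X) ^ 2 ≤ (‖p‖ * ‖X‖) ^ 2 := by
      nlinarith [abs_nonneg (inner (𝕜 := ℝ) p X), sq_abs (inner (𝕜 := ℝ) p X),
        norm_nonneg p, norm_nonneg X]
    rw [hpX] at h2
    calc ‖y‖ ^ 2 * ‖y‖ ^ 2 = (‖y‖ ^ 2) ^ 2 := by ring
      _ ≤ (‖p‖ * ‖X‖) ^ 2 := h2
      _ = ‖p‖ ^ 2 * ‖X‖ ^ 2 := by ring
      _ = ‖p‖ ^ 2 * (‖x‖ ^ 2 + ‖y‖ ^ 2) := by rw [hXnorm]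
  have heq : ‖q‖ ^ 2 = ‖y‖ ^ 2 - ‖p‖ ^ 2 := by linarith
  rw [heq, le_div_iff₀ hXpos]
  nlinarith
end

section
/- Let S and P be linear subspaces of a finite-dimensional real inner product space E and let u ∈ P. Then ‖π_{S^⊥} u‖² − ‖π_{P^⊥}(π_S u)‖² = ‖(π_P − π_S)² u‖². -/
/-- If `S` and `P` are linear subspaces of a finite-dimensional real inner product space `E`
and `u ∈ P`, then `‖π_{S^⊥} u‖² − ‖π_{P^⊥}(π_S u)‖² = ‖(π_P − π_S)² u‖²`. -/
theorem stmt5 {E : Type*} [NormedAddCommGroup E] [InnerProductSpace ℝ E]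
    [FiniteDimensional ℝ E] (S P : Submodule ℝ E) (u : E) (hu : u ∈ P) :
    ‖proj Sᗮ u‖ ^ 2 - ‖proj Pᗮ (proj S u)‖ ^ 2 =
      ‖(proj P - proj S) ((proj P - proj S) u)‖ ^ 2 := by
  set q : E := proj S u with hq
  have hqS : q ∈ S := (S.orthogonalProjectionOnto u).2
  have h1 : proj Sᗮ u = u - q := Submodule.starProjection_orthogonal_val u
  have h2 : proj Pᗮ q = q - proj P q := Submodule.starProjection_orthogonal_val q
  have hPu : proj P u = u := Submodule.starProjection_eq_self_iff.2 hu
  have hSq : proj S q = q := Submodule.starProjection_eq_self_iff.2 hqS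
  have h3 : (proj P - proj S) ((proj P - proj S) u) = u - proj P q := by
    simp only [ContinuousLinearMap.sub_apply, hPu, ← hq, map_sub, hSq]
    abel
  have hPq : proj P q ∈ P := (P.orthogonalProjectionOnto q).2
  have horth : inner ℝ (u - proj P q) (q - proj P q) = (0 : ℝ) := by
    have h4 : q - proj P q ∈ Pᗮ := Submodule.sub_starProjection_mem_orthogonal q
    exact (h4 (u - proj P q) (P.sub_mem hu hPq))
  have hnorm : ‖u - q‖ ^ 2 = ‖u - proj P q‖ ^ 2 + ‖q - proj P q‖ ^ 2 := by
    have : u - q = (u - proj P q) - (q - proj P q) := by abel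
    rw [this, norm_sub_sq_real, horth]
    ring
  rw [h1, h2, h3, hnorm]
  ring
end

section
/- Let n ≥ 2, m ≥ 1, α > 0, and let φ : ℝⁿ∖{0} → ℝᵐ be continuously differentiable, not identically zero, and positively homogeneous of degree α (i.e., φ(tx) = t^α φ(x) for all t > 0 and x ≠ 0). If ∫_{B₁(0)} ‖x‖^{2−n} ‖∂_r(φ(x)/‖x‖)‖² dx < ∞, where ∂_r(φ/‖x‖)(x) denotes the directional derivative of the map y ↦ φ(y)/‖y‖ at x in the radial direction x/‖x‖, then α ≥ 1. -/
open MeasureTheory Pointwise ENNReal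

theorem aux_alg (s a c p : ℝ) (hs : 0 < s) (ha : 0 < a) (α : ℝ) (n : ℕ) :
    (s*a) ^ ((2:ℝ) - n) * (c * ((s*a)⁻¹ * (s*a)⁻¹) * (s ^ α * p))^2
      = s ^ (2*α - 2 - n) * (a ^ ((2:ℝ)-n) * (c * (a⁻¹*a⁻¹) * p)^2) := by
  have key : s ^ ((2:ℝ) - n) * (s⁻¹)^4 * (s^α)^2 = s ^ (2*α - 2 - n) := by
    rw [← Real.rpow_natCast (s⁻¹) 4, ← Real.rpow_natCast (s^α) 2,
      ← Real.rpow_neg_one s, ← Real.rpow_mul hs.le, ← Real.rpow_mul hs.le,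
      ← Real.rpow_add hs, ← Real.rpow_add hs]
    norm_num
    ring_nf
  calc (s*a) ^ ((2:ℝ) - n) * (c * ((s*a)⁻¹ * (s*a)⁻¹) * (s ^ α * p))^2
      = (s ^ ((2:ℝ) - n) * (s⁻¹)^4 * (s^α)^2) * (a ^ ((2:ℝ)-n) * (c * (a⁻¹*a⁻¹) * p)^2) := by
        rw [Real.mul_rpow hs.le ha.le, mul_inv]; ring
    _ = _ := by rw [key]

/-- Let `φ : ℝⁿ∖{0} → ℝᵐ` be C¹, not identically zero, and positively homogeneous of degree
`α > 0`. If `∫_{B₁(0)} ‖x‖^{2−n} ‖∂_r(φ(x)/‖x‖)‖² dx < ∞`, where `∂_r` is the directional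
derivative of `y ↦ φ(y)/‖y‖` in the radial direction `x/‖x‖`, then `α ≥ 1`. -/
theorem stmt12 (n m : ℕ) (hn : 2 ≤ n) (hm : 1 ≤ m) (α : ℝ) (hα : 0 < α)
    (φ : EuclideanSpace ℝ (Fin n) → EuclideanSpace ℝ (Fin m))
    (hφ : ContDiffOn ℝ 1 φ {x | x ≠ 0})
    (hnz : ∃ x, x ≠ 0 ∧ φ x ≠ 0)
    (hhom : ∀ t : ℝ, 0 < t → ∀ x : EuclideanSpace ℝ (Fin n), x ≠ 0 →
      φ (t • x) = (t ^ α) • φ x)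
    (hint : IntegrableOn
      (fun x : EuclideanSpace ℝ (Fin n) =>
        ‖x‖ ^ ((2 : ℝ) - n) * ‖fderiv ℝ (fun y => ‖y‖⁻¹ • φ y) x (‖x‖⁻¹ • x)‖ ^ 2)
      (Metric.ball (0 : EuclideanSpace ℝ (Fin n)) 1)) :
    1 ≤ α := by
  by_contra hcon
  push_neg at hcon
  set h : EuclideanSpace ℝ (Fin n) → EuclideanSpace ℝ (Fin m) :=
    fun y => ‖y‖⁻¹ • φ y with hh
  set f : EuclideanSpace ℝ (Fin n) → ℝ :=
    fun x => ‖x‖ ^ ((2 : ℝ) - n) * ‖fderiv ℝ h x (‖x‖⁻¹ • x)‖ ^ 2 with hfdef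
  -- h is homogeneous of degree α - 1
  have hhomh : ∀ t : ℝ, 0 < t → ∀ x : EuclideanSpace ℝ (Fin n), x ≠ 0 →
      h (t • x) = (t ^ (α - 1)) • h x := by
    intro t ht x hx
    have h1 : h (t • x) = ((|t| * ‖x‖)⁻¹ * t ^ α) • φ x := by
      simp only [hh, hhom t ht x hx, norm_smul, Real.norm_eq_abs, smul_smul]
    rw [h1, hh, smul_smul]
    congr 1
    rw [abs_of_pos ht, Real.rpow_sub ht, Real.rpow_one, mul_inv]
    field_simp
  -- h differentiable away from 0
  have hdiff : ∀ x : EuclideanSpace ℝ (Fin n), x ≠ 0 → DifferentiableAt ℝ h x := by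
    intro x hx
    have hφd : DifferentiableAt ℝ φ x :=
      (hφ.differentiableOn one_ne_zero).differentiableAt (IsOpen.mem_nhds isOpen_ne hx)
    have hnorm : DifferentiableAt ℝ (fun y : EuclideanSpace ℝ (Fin n) => ‖y‖) x :=
      DifferentiableAt.norm ℝ differentiableAt_id hx
    exact (hnorm.inv (norm_ne_zero_iff.2 hx)).smul hφd
  -- radial derivative
  have key : ∀ x : EuclideanSpace ℝ (Fin n), x ≠ 0 →
      fderiv ℝ h x x = (α - 1) • h x := by
    intro x hx
    have hγ : HasDerivAt (fun t : ℝ => t • x) x 1 := by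
      simpa using (hasDerivAt_id (1:ℝ)).smul_const x
    have hfd : HasFDerivAt h (fderiv ℝ h x) ((fun t : ℝ => t • x) 1) := by
      simpa using (hdiff x hx).hasFDerivAt
    have h1 : HasDerivAt (fun t : ℝ => h (t • x)) (fderiv ℝ h x x) 1 := by
      exact hfd.comp_hasDerivAt 1 hγ
    have h2 : HasDerivAt (fun t : ℝ => (t ^ (α - 1)) • h x) ((α - 1) • h x) 1 := by
      have := (Real.hasDerivAt_rpow_const (x := (1:ℝ)) (p := α - 1)
        (Or.inl one_ne_zero)).smul_const (h x)
      simpa using this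
    have heq : (fun t : ℝ => (t ^ (α - 1)) • h x) =ᶠ[nhds 1] (fun t : ℝ => h (t • x)) := by
      filter_upwards [eventually_gt_nhds one_pos] with t ht
      exact (hhomh t ht x hx).symm
    exact h1.unique (h2.congr_of_eventuallyEq heq.symm)
  -- explicit formula for f away from 0
  have hfval : ∀ x : EuclideanSpace ℝ (Fin n), x ≠ 0 →
      f x = ‖x‖ ^ ((2:ℝ) - n) * (|α - 1| * (‖x‖⁻¹ * ‖x‖⁻¹) * ‖φ x‖) ^ 2 := by
    intro x hx
    have hmap : fderiv ℝ h x (‖x‖⁻¹ • x) = (‖x‖⁻¹ * ((α-1) * ‖x‖⁻¹)) • φ x := by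
      rw [ContinuousLinearMap.map_smul, key x hx]
      simp only [hh, smul_smul]
    simp only [hfdef, hmap, norm_smul, Real.norm_eq_abs, abs_mul, abs_inv, abs_norm]
    ring_nf
  -- f vanishes at 0
  have hf0 : f 0 = 0 := by
    simp only [hfdef, norm_zero, smul_zero, map_zero, ne_eq]
    simp
  -- homogeneity of f
  have hfs : ∀ s : ℝ, 0 < s → ∀ x : EuclideanSpace ℝ (Fin n),
      f (s • x) = s ^ (2*α - 2 - n) * f x := by
    intro s hs x
    rcases eq_or_ne x 0 with rfl | hx
    · rw [smul_zero, hf0, mul_zero]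
    · have hsx : s • x ≠ 0 := smul_ne_zero hs.ne' hx
      rw [hfval _ hsx, hfval _ hx]
      have hnsx : ‖s • x‖ = s * ‖x‖ := by
        rw [norm_smul, Real.norm_eq_abs, abs_of_pos hs]
      have hφs : ‖φ (s • x)‖ = s ^ α * ‖φ x‖ := by
        rw [hhom s hs x hx, norm_smul, Real.norm_eq_abs,
          abs_of_pos (Real.rpow_pos_of_pos hs α)]
      rw [hnsx, hφs]
      exact aux_alg s ‖x‖ |α - 1| ‖φ x‖ hs (norm_pos_iff.2 hx) α n
  -- nonnegativity of f
  have hfnn : ∀ x : EuclideanSpace ℝ (Fin n), 0 ≤ f x := by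
    intro x
    exact mul_nonneg (Real.rpow_nonneg (norm_nonneg x) _) (sq_nonneg _)
  set I : ℝ := ∫ x in Metric.ball (0:EuclideanSpace ℝ (Fin n)) 1, f x with hI
  -- scaling identity
  have hscale : ∫ x in Metric.ball (0:EuclideanSpace ℝ (Fin n)) (1/2), f x
      = (1/2:ℝ) ^ (2*α - 2) * I := by
    have h12 : (0:ℝ) < 1/2 := by norm_num
    have h1 := Measure.setIntegral_comp_smul_of_pos (volume) f
      (Metric.ball (0 : EuclideanSpace ℝ (Fin n)) 1) h12
    have hball : (1/2:ℝ) • Metric.ball (0:EuclideanSpace ℝ (Fin n)) 1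
        = Metric.ball (0:EuclideanSpace ℝ (Fin n)) (1/2) := by
      rw [smul_ball (by norm_num : (1/2:ℝ) ≠ 0)]
      simp
    rw [hball] at h1
    have h2 : ∫ x in Metric.ball (0:EuclideanSpace ℝ (Fin n)) 1, f ((1/2:ℝ) • x) =
        (1/2:ℝ) ^ (2*α - 2 - n) * I := by
      rw [hI, ← integral_const_mul]
      exact setIntegral_congr_fun measurableSet_ball (fun x _ => hfs _ h12 x)
    rw [h2] at h1
    have hfr : (Module.finrank ℝ (EuclideanSpace ℝ (Fin n))) = n := finrank_euclideanSpace_fin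
    rw [hfr] at h1
    have hexp : ((1/2:ℝ) ^ n : ℝ) * ((1/2:ℝ) ^ (2*α - 2 - n) * I) =
        (1/2:ℝ) ^ (2*α - 2) * I := by
      rw [← Real.rpow_natCast (1/2:ℝ) n, ← mul_assoc, ← Real.rpow_add h12]
      ring_nf
    rw [eq_comm, inv_smul_eq_iff₀ (by positivity : ((1/2:ℝ)^n) ≠ 0)] at h1
    rw [h1, smul_eq_mul, hexp]
  -- monotonicity
  have hmono : ∫ x in Metric.ball (0:EuclideanSpace ℝ (Fin n)) (1/2), f x ≤ I := by
    apply setIntegral_mono_set hint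
    · exact Filter.Eventually.of_forall hfnn
    · exact Filter.Eventually.of_forall (Metric.ball_subset_ball (by norm_num))
  -- positivity of I
  have hIpos : 0 < I := by
    rw [hI, setIntegral_pos_iff_support_of_nonneg_ae
      (Filter.Eventually.of_forall hfnn) hint]
    obtain ⟨x₀, hx₀, hφx₀⟩ := hnz
    set t₀ : ℝ := (2 * ‖x₀‖)⁻¹ with ht₀
    have hnx₀ : (0:ℝ) < ‖x₀‖ := norm_pos_iff.2 hx₀
    have ht₀pos : 0 < t₀ := by positivity
    set y₀ : EuclideanSpace ℝ (Fin n) := t₀ • x₀ with hy₀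
    have hy₀ne : y₀ ≠ 0 := smul_ne_zero ht₀pos.ne' hx₀
    have hy₀norm : ‖y₀‖ = 1/2 := by
      rw [hy₀, norm_smul, Real.norm_eq_abs, abs_of_pos ht₀pos, ht₀]
      field_simp
    have hφy₀ : φ y₀ ≠ 0 := by
      rw [hy₀, hhom t₀ ht₀pos x₀ hx₀]
      exact smul_ne_zero (ne_of_gt (Real.rpow_pos_of_pos ht₀pos α)) hφx₀
    set U : Set (EuclideanSpace ℝ (Fin n)) :=
      ({x | x ≠ 0} ∩ φ ⁻¹' {y | y ≠ 0}) ∩ Metric.ball (0:EuclideanSpace ℝ (Fin n)) 1 with hU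
    have hUopen : IsOpen U := by
      apply IsOpen.inter _ Metric.isOpen_ball
      exact hφ.continuousOn.isOpen_inter_preimage isOpen_ne isOpen_ne
    have hy₀U : y₀ ∈ U := by
      refine ⟨⟨hy₀ne, hφy₀⟩, mem_ball_zero_iff.2 (by rw [hy₀norm]; norm_num)⟩
    have hUsub : U ⊆ Function.support f ∩ Metric.ball (0:EuclideanSpace ℝ (Fin n)) 1 := by
      rintro x ⟨⟨hx, hφx⟩, hxb⟩
      refine ⟨?_, hxb⟩
      rw [Function.mem_support, hfval x hx]
      have h1 : (0:ℝ) < ‖x‖ := norm_pos_iff.2 hx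
      have h2 : (0:ℝ) < ‖φ x‖ := norm_pos_iff.2 hφx
      have h3 : |α - 1| ≠ 0 := abs_ne_zero.2 (sub_ne_zero.2 (ne_of_lt hcon))
      positivity
    have hpos : (0 : ENNReal) < volume U := hUopen.measure_pos volume ⟨y₀, hy₀U⟩
    exact hpos.trans_le (measure_mono hUsub)
  -- contradiction
  rw [hscale] at hmono
  have h1 : (1/2:ℝ) ^ (2*α - 2) ≤ 1 := by
    by_contra hgt
    push_neg at hgt
    nlinarith
  have h2 : 1 < (1/2:ℝ) ^ (2*α - 2) := by
    rw [Real.one_lt_rpow_iff_of_pos (by norm_num)]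
    right
    exact ⟨by norm_num, by linarith⟩
  linarith
end

section
/- Let S be an n-dimensional linear subspace of ℝⁿ × ℝᵐ with orthonormal basis τ₁, …, τₙ, let P₀ = ℝⁿ × {0}, let ψ : ℝ → ℝ be differentiable, and define the vector field ζ(x,y) = ψ(‖x‖)·(0,y) on ℝⁿ × ℝᵐ. Then at every point (x,y) with x ≠ 0, the tangential divergence of ζ along S satisfies ∑_{i=1}^n ⟨Dζ(x,y)[τᵢ], τᵢ⟩ = (1/2) ψ(‖x‖) ‖π_S − π_{P₀}‖_F² + ψ'(‖x‖) ⟨(0,y), π_S(x,0)⟩ / ‖x‖. -/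
/-- The first component `x` of a point `(x,y)` of `ℝⁿ × ℝᵐ`. -/
noncomputable def fst2 {n m : ℕ} (p : E2 n m) : EuclideanSpace ℝ (Fin n) :=
  (WithLp.equiv 2 (EuclideanSpace ℝ (Fin n) × EuclideanSpace ℝ (Fin m)) p).1

/-- The second component `y` of a point `(x,y)` of `ℝⁿ × ℝᵐ`. -/
noncomputable def snd2 {n m : ℕ} (p : E2 n m) : EuclideanSpace ℝ (Fin m) :=
  (WithLp.equiv 2 (EuclideanSpace ℝ (Fin n) × EuclideanSpace ℝ (Fin m)) p).2

/-- The plane `P₀ = ℝⁿ × {0}` as a linear subspace of `ℝⁿ × ℝᵐ`. -/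
noncomputable def P0 (n m : ℕ) : Submodule ℝ (E2 n m) :=
  (Submodule.prod (⊤ : Submodule ℝ (EuclideanSpace ℝ (Fin n)))
    (⊥ : Submodule ℝ (EuclideanSpace ℝ (Fin m)))).comap
      (WithLp.linearEquiv 2 ℝ _).toLinearMap

/-- The squared Frobenius (Hilbert–Schmidt) norm of a linear map `T : E → E`,
computed via an orthonormal basis of `E`. -/
noncomputable def frobSq {E : Type*} [NormedAddCommGroup E] [InnerProductSpace ℝ E]
    [FiniteDimensional ℝ E] (T : E →L[ℝ] E) : ℝ :=
  ∑ i, ‖T (stdOrthonormalBasis ℝ E i)‖ ^ 2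





open ContinuousLinearMap in
lemma myHasFDerivAt_norm {F : Type*} [NormedAddCommGroup F] [InnerProductSpace ℝ F]
    {x : F} (hx : x ≠ 0) : HasFDerivAt (‖·‖) (‖x‖⁻¹ • (innerSL ℝ x)) x := by
  have h1 : HasFDerivAt (fun y : F => ‖y‖ ^ 2) (2 • innerSL ℝ x) x :=
    (hasStrictFDerivAt_norm_sq x).hasFDerivAt
  have h2 : HasDerivAt Real.sqrt (1 / (2 * Real.sqrt (‖x‖ ^ 2))) (‖x‖ ^ 2) :=
    Real.hasDerivAt_sqrt (pow_ne_zero 2 (norm_ne_zero_iff.mpr hx))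
  have h3 := h2.comp_hasFDerivAt x h1
  have hfun : (fun y : F => Real.sqrt (‖y‖ ^ 2)) = fun y => ‖y‖ :=
    funext fun y => by rw [Real.sqrt_sq (norm_nonneg y)]
  rw [Function.comp_def, hfun] at h3
  convert h3 using 1
  · rfl
  · rfl
  rw [Real.sqrt_sq (norm_nonneg x), smul_comm]
  ext v
  simp only [coe_smul', Pi.smul_apply, smul_eq_mul]
  have : ‖x‖ ≠ 0 := norm_ne_zero_iff.mpr hx
  field_simp
  simp only [nsmul_eq_mul, smul_eq_mul, Nat.cast_ofNat]
  field_simp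

variable {n m : ℕ}

lemma inner_mk2 (a c : EuclideanSpace ℝ (Fin n)) (b d : EuclideanSpace ℝ (Fin m)) :
    (inner ℝ (mk2 a b) (mk2 c d) : ℝ) = inner ℝ a c + inner ℝ b d := rfl

lemma inner_e2 (p q : E2 n m) :
    (inner ℝ p q : ℝ) = inner ℝ (fst2 p) (fst2 q) + inner ℝ (snd2 p) (snd2 q) := rfl

lemma mk2_fst2_snd2 (p : E2 n m) : mk2 (fst2 p) (snd2 p) = p := rfl

lemma fst2_mk2 (a : EuclideanSpace ℝ (Fin n)) (b : EuclideanSpace ℝ (Fin m)) :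
    fst2 (mk2 a b) = a := rfl

lemma snd2_mk2 (a : EuclideanSpace ℝ (Fin n)) (b : EuclideanSpace ℝ (Fin m)) :
    snd2 (mk2 a b) = b := rfl

lemma norm_sq_e2 (p : E2 n m) : ‖p‖ ^ 2 = ‖fst2 p‖ ^ 2 + ‖snd2 p‖ ^ 2 := by
  rw [← real_inner_self_eq_norm_sq, ← real_inner_self_eq_norm_sq, ← real_inner_self_eq_norm_sq,
    inner_e2]

lemma mem_P0_iff (p : E2 n m) : p ∈ P0 n m ↔ snd2 p = 0 := by
  simp [P0, Submodule.mem_prod, snd2]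

lemma proj_P0_apply (p : E2 n m) : proj (P0 n m) p = mk2 (fst2 p) 0 := by
  have hmem : mk2 (fst2 p) 0 ∈ P0 n m := (mem_P0_iff _).mpr rfl
  have horth : ∀ w ∈ P0 n m, (inner ℝ (p - mk2 (fst2 p) 0) w : ℝ) = 0 := by
    intro w hw
    have h2 : snd2 w = 0 := (mem_P0_iff w).mp hw
    have : p - mk2 (fst2 p) 0 = mk2 0 (snd2 p) := by
      have h0 : p - mk2 (fst2 p) 0 = mk2 (fst2 p - fst2 p) (snd2 p - 0) := rfl
      rw [h0, sub_self, sub_zero]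
    rw [this, inner_e2, fst2_mk2, snd2_mk2, h2, inner_zero_left, inner_zero_right, add_zero]
  exact Submodule.eq_starProjection_of_mem_of_inner_eq_zero hmem horth

lemma proj_self {E : Type*} [NormedAddCommGroup E] [InnerProductSpace ℝ E]
    (V : Submodule ℝ E) [V.HasOrthogonalProjection] {v : E} (hv : v ∈ V) :
    proj V v = v :=
  Submodule.starProjection_eq_self_iff.mpr hv

lemma proj_orth {E : Type*} [NormedAddCommGroup E] [InnerProductSpace ℝ E]
    (V : Submodule ℝ E) [V.HasOrthogonalProjection] {v : E} (hv : v ∈ Vᗮ) :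
    proj V v = 0 := by
  simp [proj, Submodule.orthogonalProjectionOnto_apply_of_mem_orthogonal hv]


open ContinuousLinearMap in
lemma sum_normsq_adjoint {E : Type*} [NormedAddCommGroup E] [InnerProductSpace ℝ E]
    [FiniteDimensional ℝ E] {ι κ : Type*} [Fintype ι] [Fintype κ]
    (b : OrthonormalBasis ι ℝ E) (c : OrthonormalBasis κ ℝ E) (T : E →L[ℝ] E) :
    ∑ i, ‖T (b i)‖ ^ 2 = ∑ j, ‖adjoint T (c j)‖ ^ 2 := by
  have key : ∀ v : E, ‖v‖ ^ 2 = ∑ j, (inner ℝ v (c j) : ℝ) * inner ℝ (c j) v := fun v => by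
    rw [c.sum_inner_mul_inner, real_inner_self_eq_norm_sq]
  have key2 : ∀ v : E, ‖v‖ ^ 2 = ∑ i, (inner ℝ v (b i) : ℝ) * inner ℝ (b i) v := fun v => by
    rw [b.sum_inner_mul_inner, real_inner_self_eq_norm_sq]
  calc ∑ i, ‖T (b i)‖ ^ 2 = ∑ i, ∑ j, (inner ℝ (T (b i)) (c j) : ℝ) * inner ℝ (c j) (T (b i)) := by
        simp_rw [← key]
    _ = ∑ j, ∑ i, (inner ℝ (adjoint T (c j)) (b i) : ℝ) * inner ℝ (b i) (adjoint T (c j)) := by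
        rw [Finset.sum_comm]
        congr 1; ext j; congr 1; ext i
        rw [← adjoint_inner_right T (b i) (c j), ← adjoint_inner_left T (b i) (c j),
          real_inner_comm (b i) (adjoint T (c j)), mul_comm]
    _ = ∑ j, ‖adjoint T (c j)‖ ^ 2 := by simp_rw [← key2]

open ContinuousLinearMap in
lemma frobSq_eq_onb {E : Type*} [NormedAddCommGroup E] [InnerProductSpace ℝ E]
    [FiniteDimensional ℝ E] {ι : Type*} [Fintype ι]
    (b : OrthonormalBasis ι ℝ E) {T : E →L[ℝ] E} (hT : IsSelfAdjoint T) :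
    frobSq T = ∑ i, ‖T (b i)‖ ^ 2 := by
  have h1 := sum_normsq_adjoint (stdOrthonormalBasis ℝ E) b T
  have h2 := sum_normsq_adjoint b b T
  rw [isSelfAdjoint_iff'.mp hT] at h1 h2
  exact h1

lemma card_eq : Module.finrank ℝ (E2 n m) = Fintype.card (Fin n ⊕ Fin m) := by
  rw [(WithLp.linearEquiv 2 ℝ _).finrank_eq]
  simp [Module.finrank_prod]

lemma exists_extension (τ : Fin n → E2 n m) (hτ : Orthonormal ℝ τ) :
    ∃ b : OrthonormalBasis (Fin n ⊕ Fin m) ℝ (E2 n m), ∀ i, b (Sum.inl i) = τ i := by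
  set v : Fin n ⊕ Fin m → E2 n m := Sum.elim τ 0 with hv
  set s : Set (Fin n ⊕ Fin m) := Set.range Sum.inl with hs
  set e : Fin n ≃ s := Equiv.ofInjective Sum.inl Sum.inl_injective with he
  have hres : s.restrict v = τ ∘ e.symm := by
    funext z
    have hz2 : (z : Fin n ⊕ Fin m) = Sum.inl (e.symm z) :=
      (Equiv.apply_ofInjective_symm Sum.inl_injective z).symm
    simp only [Set.restrict_apply, Function.comp_apply, hz2, hv, Sum.elim_inl]
    show Sum.elim τ 0 (z : Fin n ⊕ Fin m) = _
    rw [hz2, Sum.elim_inl]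
  have horth : Orthonormal ℝ (s.restrict v) := by
    rw [hres]; exact hτ.comp _ e.symm.injective
  obtain ⟨b, hb⟩ := horth.exists_orthonormalBasis_extension_of_card_eq card_eq
  exact ⟨b, fun i => by rw [hb (Sum.inl i) ⟨i, rfl⟩]; rfl⟩

lemma sub_mk2 (p : E2 n m) (a : EuclideanSpace ℝ (Fin n)) (b : EuclideanSpace ℝ (Fin m)) :
    p - mk2 a b = mk2 (fst2 p - a) (snd2 p - b) := rfl

lemma norm_sq_mk2_left (a : EuclideanSpace ℝ (Fin n)) :
    ‖(mk2 a 0 : E2 n m)‖ ^ 2 = ‖a‖ ^ 2 := by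
  rw [norm_sq_e2, fst2_mk2, snd2_mk2, norm_zero]; ring

lemma norm_sq_mk2_right (b : EuclideanSpace ℝ (Fin m)) :
    ‖(mk2 0 b : E2 n m)‖ ^ 2 = ‖b‖ ^ 2 := by
  rw [norm_sq_e2, fst2_mk2, snd2_mk2, norm_zero]; ring

open ContinuousLinearMap in
lemma frobSq_val (S : Submodule ℝ (E2 n m)) (τ : Fin n → E2 n m) (hτ : Orthonormal ℝ τ)
    (hspan : Submodule.span ℝ (Set.range τ) = S) :
    frobSq (proj S - proj (P0 n m)) = 2 * ∑ i, ‖snd2 (τ i)‖ ^ 2 := by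
  obtain ⟨b, hb⟩ := exists_extension τ hτ
  have hP0sa : IsSelfAdjoint (proj (P0 n m)) := isSelfAdjoint_starProjection (P0 n m)
  have hSsa : IsSelfAdjoint (proj S) := isSelfAdjoint_starProjection S
  have hT : IsSelfAdjoint (proj S - proj (P0 n m)) := hSsa.sub hP0sa
  have hτS : ∀ i, τ i ∈ S := fun i =>
    hspan ▸ Submodule.subset_span (Set.mem_range_self i)
  have hborth : ∀ j, b (Sum.inr j) ∈ Sᗮ := by
    intro j
    rw [Submodule.mem_orthogonal]
    intro u hu
    rw [← hspan] at hu
    induction hu using Submodule.span_induction with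
    | mem u hu =>
        obtain ⟨i, rfl⟩ := hu
        rw [← hb i]
        exact b.orthonormal.2 (by simp)
    | zero => rw [inner_zero_left]
    | add u v _ _ hu hv => rw [inner_add_left, hu, hv, add_zero]
    | smul c u _ hu => rw [real_inner_smul_left, hu, mul_zero]
  -- value on the inl part
  have hinl : ∀ i, ‖(proj S - proj (P0 n m)) (b (Sum.inl i))‖ ^ 2 = ‖snd2 (τ i)‖ ^ 2 := by
    intro i
    rw [hb i, ContinuousLinearMap.sub_apply, proj_self S (hτS i), proj_P0_apply,
      sub_mk2, sub_self, sub_zero, norm_sq_mk2_right]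
  have hinr : ∀ j, ‖(proj S - proj (P0 n m)) (b (Sum.inr j))‖ ^ 2
      = ‖fst2 (b (Sum.inr j))‖ ^ 2 := by
    intro j
    rw [ContinuousLinearMap.sub_apply, proj_orth S (hborth j), proj_P0_apply, zero_sub,
      norm_neg, norm_sq_mk2_left]
  -- total mass of the P0-projection over the basis b
  have hprojP0 : ∀ p : E2 n m, ‖proj (P0 n m) p‖ ^ 2 = ‖fst2 p‖ ^ 2 := fun p => by
    rw [proj_P0_apply, norm_sq_mk2_left]
  have hmass : ∑ k, ‖fst2 (b k)‖ ^ 2 = (n : ℝ) := by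
    have h1 := sum_normsq_adjoint b
      ((EuclideanSpace.basisFun (Fin n) ℝ).prod (EuclideanSpace.basisFun (Fin m) ℝ))
      (proj (P0 n m))
    rw [isSelfAdjoint_iff'.mp hP0sa] at h1
    simp_rw [hprojP0] at h1
    rw [h1, Fintype.sum_sum_type]
    have hc1 : ∀ l : Fin n,
        fst2 (((EuclideanSpace.basisFun (Fin n) ℝ).prod (EuclideanSpace.basisFun (Fin m) ℝ))
          (Sum.inl l)) = EuclideanSpace.basisFun (Fin n) ℝ l := by
      intro l; rw [OrthonormalBasis.prod_apply]; rfl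
    have hc2 : ∀ l : Fin m,
        fst2 (((EuclideanSpace.basisFun (Fin n) ℝ).prod (EuclideanSpace.basisFun (Fin m) ℝ))
          (Sum.inr l)) = 0 := by
      intro l; rw [OrthonormalBasis.prod_apply]; rfl
    simp_rw [hc1, hc2]
    simp [(EuclideanSpace.basisFun (Fin n) ℝ).orthonormal.1]
  have hbl : ∀ i, ‖fst2 (b (Sum.inl i))‖ ^ 2 = 1 - ‖snd2 (τ i)‖ ^ 2 := by
    intro i
    rw [hb i]
    have := norm_sq_e2 (τ i)
    rw [hτ.1 i] at this
    simp at this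
    linarith
  rw [Fintype.sum_sum_type] at hmass
  simp_rw [hbl] at hmass
  rw [Finset.sum_sub_distrib, Finset.sum_const, Finset.card_univ, Fintype.card_fin,
    nsmul_eq_mul, mul_one] at hmass
  rw [frobSq_eq_onb b hT, Fintype.sum_sum_type]
  simp_rw [hinl, hinr]
  linarith

lemma proj_S_apply (S : Submodule ℝ (E2 n m)) (τ : Fin n → E2 n m) (hτ : Orthonormal ℝ τ)
    (hspan : Submodule.span ℝ (Set.range τ) = S) (u : E2 n m) :
    proj S u = ∑ i, (inner ℝ (τ i) u : ℝ) • τ i := by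
  classical
  have hτS : ∀ i, τ i ∈ S := fun i =>
    hspan ▸ Submodule.subset_span (Set.mem_range_self i)
  apply Submodule.eq_starProjection_of_mem_of_inner_eq_zero
  · exact Submodule.sum_mem _ fun i _ => Submodule.smul_mem _ _ (hτS i)
  · intro w hw
    rw [← hspan] at hw
    induction hw using Submodule.span_induction with
    | mem w hw =>
        obtain ⟨j, rfl⟩ := hw
        rw [inner_sub_left, sum_inner]
        simp only [real_inner_smul_left]
        rw [Finset.sum_congr rfl fun i _ => by
          rw [orthonormal_iff_ite.mp hτ i j]]
        simp only [mul_ite, mul_one, mul_zero]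
        rw [Finset.sum_ite_eq' Finset.univ j fun i => (inner ℝ (τ i) u : ℝ)]
        rw [if_pos (Finset.mem_univ j), sub_eq_zero]
        exact real_inner_comm (τ j) u
    | zero => rw [inner_zero_right]
    | add u' v' _ _ hu hv => rw [inner_add_right, hu, hv, add_zero]
    | smul c u' _ hu => rw [real_inner_smul_right, hu, mul_zero]

lemma proj_S_inner (S : Submodule ℝ (E2 n m)) (τ : Fin n → E2 n m) (hτ : Orthonormal ℝ τ)
    (hspan : Submodule.span ℝ (Set.range τ) = S) (u w : E2 n m) :
    (inner ℝ w (proj S u) : ℝ) = ∑ i, (inner ℝ (τ i) u : ℝ) * inner ℝ w (τ i) := by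
  rw [proj_S_apply S τ hτ hspan u, inner_sum]
  exact Finset.sum_congr rfl fun i _ => real_inner_smul_right _ _ _

noncomputable def L1 (n m : ℕ) : E2 n m →L[ℝ] EuclideanSpace ℝ (Fin n) :=
  (ContinuousLinearMap.fst ℝ _ _).comp
    (WithLp.prodContinuousLinearEquiv 2 ℝ _ _).toContinuousLinearMap

noncomputable def L2 (n m : ℕ) : E2 n m →L[ℝ] E2 n m :=
  ((WithLp.prodContinuousLinearEquiv 2 ℝ _ _).symm.toContinuousLinearMap).comp
    ((ContinuousLinearMap.inr ℝ (EuclideanSpace ℝ (Fin n)) (EuclideanSpace ℝ (Fin m))).comp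
      ((ContinuousLinearMap.snd ℝ _ _).comp
        (WithLp.prodContinuousLinearEquiv 2 ℝ _ _).toContinuousLinearMap))

lemma L1_apply (p : E2 n m) : L1 n m p = fst2 p := rfl

lemma L2_apply (p : E2 n m) : L2 n m p = mk2 0 (snd2 p) := rfl

set_option maxHeartbeats 1000000 in
set_option synthInstance.maxHeartbeats 400000 in
open ContinuousLinearMap in
lemma zeta_fderiv (ψ : ℝ → ℝ) (hψ : Differentiable ℝ ψ)
    (x : EuclideanSpace ℝ (Fin n)) (y : EuclideanSpace ℝ (Fin m)) (hx : x ≠ 0) :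
    HasFDerivAt (fun p : E2 n m => ψ ‖fst2 p‖ • mk2 0 (snd2 p))
      (ψ ‖x‖ • L2 n m +
        ((deriv ψ ‖x‖) • ((‖x‖⁻¹ • (innerSL ℝ x)).comp (L1 n m))).smulRight (mk2 0 y))
      (mk2 x y) := by
  have h1 : HasFDerivAt (fun p : E2 n m => ‖L1 n m p‖)
      ((‖x‖⁻¹ • (innerSL ℝ x)).comp (L1 n m)) (mk2 x y) :=
    (myHasFDerivAt_norm hx).comp (mk2 x y) (L1 n m).hasFDerivAt
  have h2 : HasFDerivAt (fun p : E2 n m => ψ ‖L1 n m p‖)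
      ((deriv ψ ‖x‖) • ((‖x‖⁻¹ • (innerSL ℝ x)).comp (L1 n m))) (mk2 x y) :=
    (hψ ‖x‖).hasDerivAt.comp_hasFDerivAt (mk2 x y) h1
  have h3 := h2.smul (L2 n m).hasFDerivAt (x := mk2 x y)
  exact h3

set_option maxHeartbeats 1000000 in
set_option synthInstance.maxHeartbeats 400000 in
/-- Tangential divergence along an `n`-dimensional subspace `S` of `ℝⁿ × ℝᵐ` (with orthonormal
basis `τ₁,…,τₙ`) of the vector field `ζ(x,y) = ψ(‖x‖)·(0,y)`: at every point `(x,y)` with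
`x ≠ 0`, `∑ᵢ ⟨Dζ(x,y)[τᵢ], τᵢ⟩ = ½ψ(‖x‖)‖π_S − π_{P₀}‖_F² + ψ'(‖x‖)⟨(0,y), π_S(x,0)⟩/‖x‖`. -/
theorem stmt17 (n m : ℕ) (S : Submodule ℝ (E2 n m))
    (τ : Fin n → E2 n m) (hτ : Orthonormal ℝ τ)
    (hspan : Submodule.span ℝ (Set.range τ) = S)
    (ψ : ℝ → ℝ) (hψ : Differentiable ℝ ψ)
    (x : EuclideanSpace ℝ (Fin n)) (y : EuclideanSpace ℝ (Fin m)) (hx : x ≠ 0) :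
    ∑ i, (inner ℝ
        (fderiv ℝ (fun p : E2 n m => ψ ‖fst2 p‖ • mk2 0 (snd2 p)) (mk2 x y) (τ i))
        (τ i) : ℝ) =
      (1 / 2) * ψ ‖x‖ * frobSq (proj S - proj (P0 n m)) +
        deriv ψ ‖x‖ * (inner ℝ (mk2 0 y) (proj S (mk2 x 0)) : ℝ) / ‖x‖ := by
  classical
  have hr : ‖x‖ ≠ 0 := norm_ne_zero_iff.mpr hx
  rw [(zeta_fderiv ψ hψ x y hx).fderiv]
  have happ : ∀ i, (inner ℝ (((ψ ‖x‖ • L2 n m +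
        ((deriv ψ ‖x‖) • ((‖x‖⁻¹ • (innerSL ℝ x)).comp (L1 n m))).smulRight (mk2 0 y) :
          E2 n m →L[ℝ] E2 n m)) (τ i))
        (τ i) : ℝ)
      = ψ ‖x‖ * ‖snd2 (τ i)‖ ^ 2 +
        (deriv ψ ‖x‖ * (‖x‖⁻¹ * (inner ℝ x (fst2 (τ i)) : ℝ))) * (inner ℝ (mk2 0 y) (τ i) : ℝ) := by
    intro i
    rw [ContinuousLinearMap.add_apply, ContinuousLinearMap.smul_apply, ContinuousLinearMap.smulRight_apply,
      ContinuousLinearMap.smul_apply, ContinuousLinearMap.comp_apply,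
      ContinuousLinearMap.smul_apply, L1_apply, L2_apply, innerSL_apply_apply, smul_eq_mul,
      inner_add_left, real_inner_smul_left, real_inner_smul_left]
    have h4 : (inner ℝ (mk2 0 (snd2 (τ i))) (τ i) : ℝ) = ‖snd2 (τ i)‖ ^ 2 := by
      rw [inner_e2, fst2_mk2, snd2_mk2, inner_zero_left, zero_add, real_inner_self_eq_norm_sq]
    rw [h4, smul_eq_mul]
  simp_rw [happ]
  rw [Finset.sum_add_distrib, ← Finset.mul_sum,
    frobSq_val S τ hτ hspan, proj_S_inner S τ hτ hspan (mk2 x 0) (mk2 0 y)]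
  have hc : ∀ i, (inner ℝ (τ i) (mk2 x 0) : ℝ) = (inner ℝ x (fst2 (τ i)) : ℝ) := by
    intro i
    rw [inner_e2, fst2_mk2, snd2_mk2, inner_zero_right, add_zero, real_inner_comm]
  simp_rw [hc]
  have hpull : ∑ i, (deriv ψ ‖x‖ * (‖x‖⁻¹ * (inner ℝ x (fst2 (τ i)) : ℝ)))
        * (inner ℝ (mk2 0 y) (τ i) : ℝ)
      = deriv ψ ‖x‖ * ‖x‖⁻¹ *
        ∑ i, (inner ℝ x (fst2 (τ i)) : ℝ) * (inner ℝ (mk2 0 y) (τ i) : ℝ) := by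
    rw [Finset.mul_sum]
    exact Finset.sum_congr rfl fun i _ => by ring
  rw [hpull, div_eq_mul_inv]
  ring
end
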